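/- Assume Axioms A3 and A4 hold with uniform convergence on compact sets, that d^x is nondegenerate for every x, and let Σ^x(u, v) = lim_{ε→0+} Σ_ε^x(u, v) (uniform on compact sets). Then the dilatations δ^x are compatible with the group operation Σ^x: for every μ ∈ (0, 1] and all u, v ∈ X, δ_μ^x(Σ^x(u, v)) = Σ^x(δ_μ^x u, δ_μ^x v); thus (X, Σ^x, δ^x) is a conical group whose left translations Σ^x(u, ·) are d^x-isometries. -/

import Mathlib

open Filter Topology

/-- Under axioms A3, A4 (uniform on compact sets) with each `d^x`
nondegenerate, and `Σ^x = lim Σ_ε^x` (uniform on compact sets), the dilatations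
are compatible with the group operation: for every `μ ∈ (0,1]` and all `u, v`,
`δ_μ^x(Σ^x(u, v)) = Σ^x(δ_μ^x u, δ_μ^x v)`; thus `(X, Σ^x, δ^x)` is a conical
group whose left translations `Σ^x(u, ·)` are `d^x`-isometries. -/
theorem tangent_space_is_conical_group
    {X : Type*} [MetricSpace X] [CompleteSpace X] [LocallyCompactSpace X]
    (δ : ℝ → X → X → X)
    (hcomp : ∀ ε μ : ℝ, 0 < ε → 0 < μ → ∀ x y : X, δ ε x (δ μ x y) = δ (ε * μ) x y)
    (hone : ∀ x y : X, δ 1 x y = y)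
    (hfix : ∀ ε : ℝ, 0 < ε → ∀ x : X, δ ε x x = x)
    (hcont : ContinuousOn (fun p : ℝ × X × X => δ p.1 p.2.1 p.2.2) {p | 0 < p.1})
    (hlim0 : ∀ x y : X, Tendsto (fun ε : ℝ => δ ε x y) (𝓝[>] (0 : ℝ)) (𝓝 x))
    (dx : X → X → X → ℝ)
    (hA3 : ∀ K : Set (X × X × X), IsCompact K →
      TendstoUniformlyOn
        (fun (ε : ℝ) (p : X × X × X) => (1 / ε) * dist (δ ε p.1 p.2.1) (δ ε p.1 p.2.2))
        (fun p => dx p.1 p.2.1 p.2.2) (𝓝[>] (0 : ℝ)) K)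
    (ΔL : X → X → X → X)
    (hA4 : ∀ K : Set (X × X × X), IsCompact K →
      TendstoUniformlyOn
        (fun (ε : ℝ) (p : X × X × X) => δ ε⁻¹ (δ ε p.1 p.2.1) (δ ε p.1 p.2.2))
        (fun p => ΔL p.1 p.2.1 p.2.2) (𝓝[>] (0 : ℝ)) K)
    (hnd : ∀ x v w : X, dx x v w = 0 → v = w)
    (SigL : X → X → X → X)
    (hSig : ∀ K : Set (X × X × X), IsCompact K →
      TendstoUniformlyOn
        (fun (ε : ℝ) (p : X × X × X) => δ ε⁻¹ p.1 (δ ε (δ ε p.1 p.2.1) p.2.2))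
        (fun p => SigL p.1 p.2.1 p.2.2) (𝓝[>] (0 : ℝ)) K) :
    (∀ x : X, ∀ μ : ℝ, 0 < μ → μ ≤ 1 → ∀ u v : X,
        δ μ x (SigL x u v) = SigL x (δ μ x u) (δ μ x v)) ∧
    (∀ x u v w : X, dx x (SigL x u v) (SigL x u w) = dx x v w) := by
  -- continuity of dilatations at fixed positive scale
  have hδc : ∀ ε : ℝ, 0 < ε → Continuous (fun p : X × X => δ ε p.1 p.2) := by
    intro ε hε
    rw [continuous_iff_continuousAt]
    intro p
    have hopen : IsOpen {p : ℝ × X × X | 0 < p.1} :=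
      isOpen_lt continuous_const continuous_fst
    have h1 : ContinuousAt (fun q : ℝ × X × X => δ q.1 q.2.1 q.2.2) (ε, p) :=
      hcont.continuousAt (hopen.mem_nhds hε)
    exact h1.comp ((continuous_const.prodMk continuous_id).continuousAt)
  -- continuity of dx
  have hdxc : Continuous (fun p : X × X × X => dx p.1 p.2.1 p.2.2) := by
    rw [continuous_iff_continuousAt]
    intro p
    obtain ⟨K, hKc, hKn⟩ := exists_compact_mem_nhds p
    refine ((hA3 K hKc).continuousOn (Eventually.frequently ?_)).continuousAt hKn
    filter_upwards [self_mem_nhdsWithin] with ε hε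
    have hε' : (0:ℝ) < ε := hε
    have c1 : Continuous (fun p : X × X × X => δ ε p.1 p.2.1) :=
      (hδc ε hε').comp (continuous_fst.prodMk (continuous_fst.comp continuous_snd))
    have c2 : Continuous (fun p : X × X × X => δ ε p.1 p.2.2) :=
      (hδc ε hε').comp (continuous_fst.prodMk (continuous_snd.comp continuous_snd))
    exact (continuous_const.mul (c1.dist c2)).continuousOn
  -- dx x w w = 0
  have hdx0 : ∀ x w : X, dx x w w = 0 := by
    intro x w
    have h := (hA3 {(x, w, w)} isCompact_singleton).tendsto_at rfl
    have h2 : Tendsto (fun ε : ℝ => (1 / ε) * dist (δ ε x w) (δ ε x w))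
        (𝓝[>] (0:ℝ)) (𝓝 0) := by
      have : (fun ε : ℝ => (1 / ε) * dist (δ ε x w) (δ ε x w)) = fun _ => (0:ℝ) := by
        funext ε; simp [dist_self]
      rw [this]; exact tendsto_const_nhds
    exact tendsto_nhds_unique h h2
  -- key: uniform A3 evaluated along a moving point
  have key : ∀ g : ℝ → ℝ, Tendsto g (𝓝[>] (0:ℝ)) (𝓝[>] (0:ℝ)) →
      ∀ K : Set (X × X × X), IsCompact K →
      ∀ γ : ℝ → X × X × X, (∀ᶠ ε in 𝓝[>] (0:ℝ), γ ε ∈ K) →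
      Tendsto (fun ε =>
        (1 / g ε) * dist (δ (g ε) (γ ε).1 (γ ε).2.1) (δ (g ε) (γ ε).1 (γ ε).2.2)
        - dx (γ ε).1 (γ ε).2.1 (γ ε).2.2) (𝓝[>] (0:ℝ)) (𝓝 0) := by
    intro g hg K hKc γ hγ
    have hF := hA3 K hKc
    rw [Metric.tendstoUniformlyOn_iff] at hF
    rw [Metric.tendsto_nhds]
    intro η hη
    filter_upwards [hγ, hg.eventually (hF η hη)] with ε h1 h2
    have h3 := h2 _ h1
    rw [Real.dist_eq] at h3 ⊢
    rw [sub_zero, abs_sub_comm]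
    exact h3
  -- pointwise limit of Σ_ε
  have hSigPt : ∀ x u v : X,
      Tendsto (fun ε : ℝ => δ ε⁻¹ x (δ ε (δ ε x u) v)) (𝓝[>] (0:ℝ))
        (𝓝 (SigL x u v)) := fun x u v =>
    (hSig {(x, u, v)} isCompact_singleton).tendsto_at rfl
  constructor
  · -- Part 1
    intro x μ hμ0 _hμ1 u v
    have hg : Tendsto (fun ε : ℝ => ε / μ) (𝓝[>] (0:ℝ)) (𝓝[>] (0:ℝ)) := by
      apply tendsto_nhdsWithin_of_tendsto_nhds_of_eventually_within
      · have : Tendsto (fun ε : ℝ => ε / μ) (𝓝 (0:ℝ)) (𝓝 ((0:ℝ) / μ)) :=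
          (tendsto_id.div_const μ)
        rw [zero_div] at this
        exact this.mono_left nhdsWithin_le_nhds
      · filter_upwards [self_mem_nhdsWithin] with ε hε
        exact div_pos hε hμ0
    set y : ℝ → X := fun ε => δ ε x u with hy
    set a : ℝ → X := fun ε => δ μ (y ε) v with ha
    set b : X := δ μ x v with hb
    set A : ℝ → X := fun ε => δ μ x (δ ε⁻¹ x (δ ε (y ε) v)) with hA
    set B : ℝ → X := fun ε =>
      δ (ε / μ)⁻¹ x (δ (ε / μ) (δ (ε / μ) x (δ μ x u)) (δ μ x v)) with hB
    -- limits
    have hyl : Tendsto y (𝓝[>] (0:ℝ)) (𝓝 x) := hlim0 x u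
    have hal : Tendsto a (𝓝[>] (0:ℝ)) (𝓝 b) := by
      have := ((hδc μ hμ0).tendsto (x, v)).comp
        (hyl.prodMk_nhds (tendsto_const_nhds : Tendsto (fun _ : ℝ => v) _ _))
      exact this
    have hAl : Tendsto A (𝓝[>] (0:ℝ)) (𝓝 (δ μ x (SigL x u v))) := by
      have hc : Continuous (fun z : X => δ μ x z) :=
        (hδc μ hμ0).comp (continuous_const.prodMk continuous_id)
      exact (hc.tendsto (SigL x u v)).comp (hSigPt x u v)
    have hBl : Tendsto B (𝓝[>] (0:ℝ)) (𝓝 (SigL x (δ μ x u) (δ μ x v))) :=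
      (hSigPt x (δ μ x u) (δ μ x v)).comp hg
    -- compact neighborhoods
    obtain ⟨K1, hK1c, hK1n⟩ := exists_compact_mem_nhds x
    obtain ⟨K2, hK2c, hK2n⟩ := exists_compact_mem_nhds b
    obtain ⟨K3, hK3c, hK3n⟩ := exists_compact_mem_nhds (δ μ x (SigL x u v))
    obtain ⟨K4, hK4c, hK4n⟩ := exists_compact_mem_nhds (SigL x (δ μ x u) (δ μ x v))
    -- Step A : (1/(ε/μ)) * dist (δ (ε/μ) (y ε) (a ε)) (δ (ε/μ) (y ε) b) → 0
    have hmemA : ∀ᶠ ε in 𝓝[>] (0:ℝ), (y ε, a ε, b) ∈ K1 ×ˢ K2 ×ˢ K2 := by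
      filter_upwards [hyl.eventually_mem hK1n, hal.eventually_mem hK2n] with ε h1 h2
      exact ⟨h1, h2, mem_of_mem_nhds hK2n⟩
    have hA' := key _ hg (K1 ×ˢ K2 ×ˢ K2) (hK1c.prod (hK2c.prod hK2c))
      (fun ε => (y ε, a ε, b)) hmemA
    have hdxl : Tendsto (fun ε => dx (y ε) (a ε) b) (𝓝[>] (0:ℝ)) (𝓝 0) := by
      have := (hdxc.tendsto (x, b, b)).comp
        (hyl.prodMk_nhds (hal.prodMk_nhds
          (tendsto_const_nhds : Tendsto (fun _ : ℝ => b) _ _)))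
      rw [hdx0 x b] at this
      exact this
    have hPQ : Tendsto (fun ε =>
        (1 / (ε / μ)) * dist (δ (ε / μ) (y ε) (a ε)) (δ (ε / μ) (y ε) b))
        (𝓝[>] (0:ℝ)) (𝓝 0) := by
      have h := hA'.add hdxl
      rw [add_zero] at h
      exact h.congr (fun ε => by ring)
    -- Step B
    have hmemB : ∀ᶠ ε in 𝓝[>] (0:ℝ), ((x, A ε, B ε) : X × X × X) ∈ K1 ×ˢ K3 ×ˢ K4 := by
      filter_upwards [hAl.eventually_mem hK3n, hBl.eventually_mem hK4n] with ε h1 h2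
      exact ⟨mem_of_mem_nhds hK1n, h1, h2⟩
    have hB' := key _ hg (K1 ×ˢ K3 ×ˢ K4) (hK1c.prod (hK3c.prod hK4c))
      (fun ε => (x, A ε, B ε)) hmemB
    -- the algebraic identification
    have heq : ∀ᶠ ε in 𝓝[>] (0:ℝ),
        (1 / (ε / μ)) * dist (δ (ε / μ) x (A ε)) (δ (ε / μ) x (B ε)) =
        (1 / (ε / μ)) * dist (δ (ε / μ) (y ε) (a ε)) (δ (ε / μ) (y ε) b) := by
      filter_upwards [self_mem_nhdsWithin] with ε hε
      have hε' : (0:ℝ) < ε := hε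
      have hεμ : (0:ℝ) < ε / μ := div_pos hε' hμ0
      have hεinv : (0:ℝ) < ε⁻¹ := inv_pos.mpr hε'
      have hεμinv : (0:ℝ) < (ε / μ)⁻¹ := inv_pos.mpr hεμ
      have e1 : δ (ε / μ) x (A ε) = δ (ε / μ) (y ε) (a ε) := by
        rw [hA]
        rw [hcomp (ε / μ) μ hεμ hμ0, show ε / μ * μ = ε from by field_simp,
          hcomp ε ε⁻¹ hε' hεinv, mul_inv_cancel₀ (ne_of_gt hε'), hone]
        rw [ha]
        rw [hcomp (ε / μ) μ hεμ hμ0, show ε / μ * μ = ε from by field_simp]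
      have e2 : δ (ε / μ) x (B ε) = δ (ε / μ) (y ε) b := by
        rw [hB]
        rw [hcomp (ε / μ) (ε / μ)⁻¹ hεμ hεμinv, mul_inv_cancel₀ (ne_of_gt hεμ), hone,
          hcomp (ε / μ) μ hεμ hμ0, show ε / μ * μ = ε from by field_simp]
      rw [e1, e2]
    have hGlim : Tendsto (fun ε =>
        (1 / (ε / μ)) * dist (δ (ε / μ) x (A ε)) (δ (ε / μ) x (B ε)))
        (𝓝[>] (0:ℝ)) (𝓝 0) := hPQ.congr' (heq.mono fun ε h => h.symm)
    have hdxAB : Tendsto (fun ε => dx x (A ε) (B ε)) (𝓝[>] (0:ℝ)) (𝓝 0) := by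
      have h := hGlim.sub hB'
      rw [sub_zero] at h
      exact h.congr (fun ε => by ring)
    have hfin : Tendsto (fun ε => dx x (A ε) (B ε)) (𝓝[>] (0:ℝ))
        (𝓝 (dx x (δ μ x (SigL x u v)) (SigL x (δ μ x u) (δ μ x v)))) := by
      exact (hdxc.tendsto _).comp
        ((tendsto_const_nhds : Tendsto (fun _ : ℝ => x) _ _).prodMk_nhds
          (hAl.prodMk_nhds hBl))
    exact hnd x _ _ (tendsto_nhds_unique hfin hdxAB)
  · -- Part 2
    intro x u v w
    set y : ℝ → X := fun ε => δ ε x u with hy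
    set Sv : ℝ → X := fun ε => δ ε⁻¹ x (δ ε (y ε) v) with hSv
    set Sw : ℝ → X := fun ε => δ ε⁻¹ x (δ ε (y ε) w) with hSw
    have hyl : Tendsto y (𝓝[>] (0:ℝ)) (𝓝 x) := hlim0 x u
    have hSvl : Tendsto Sv (𝓝[>] (0:ℝ)) (𝓝 (SigL x u v)) := hSigPt x u v
    have hSwl : Tendsto Sw (𝓝[>] (0:ℝ)) (𝓝 (SigL x u w)) := hSigPt x u w
    obtain ⟨K1, hK1c, hK1n⟩ := exists_compact_mem_nhds x
    obtain ⟨K3, hK3c, hK3n⟩ := exists_compact_mem_nhds (SigL x u v)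
    obtain ⟨K4, hK4c, hK4n⟩ := exists_compact_mem_nhds (SigL x u w)
    have hid : Tendsto (fun ε : ℝ => ε) (𝓝[>] (0:ℝ)) (𝓝[>] (0:ℝ)) := tendsto_id
    -- claim 1
    have hmem1 : ∀ᶠ ε in 𝓝[>] (0:ℝ),
        ((y ε, v, w) : X × X × X) ∈ K1 ×ˢ ({v} : Set X) ×ˢ ({w} : Set X) := by
      filter_upwards [hyl.eventually_mem hK1n] with ε h1
      exact ⟨h1, rfl, rfl⟩
    have hc1 := key _ hid (K1 ×ˢ ({v} : Set X) ×ˢ ({w} : Set X))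
      (hK1c.prod (isCompact_singleton.prod isCompact_singleton))
      (fun ε => (y ε, v, w)) hmem1
    have hdxy : Tendsto (fun ε => dx (y ε) v w) (𝓝[>] (0:ℝ)) (𝓝 (dx x v w)) :=
      (hdxc.tendsto (x, v, w)).comp
        (hyl.prodMk_nhds ((tendsto_const_nhds : Tendsto (fun _ : ℝ => v) _ _).prodMk_nhds
          (tendsto_const_nhds : Tendsto (fun _ : ℝ => w) _ _)))
    have hD : Tendsto (fun ε => (1 / ε) * dist (δ ε (y ε) v) (δ ε (y ε) w))
        (𝓝[>] (0:ℝ)) (𝓝 (dx x v w)) := by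
      have h := hc1.add hdxy
      rw [zero_add] at h
      exact h.congr (fun ε => by ring)
    -- claim 2
    have hmem2 : ∀ᶠ ε in 𝓝[>] (0:ℝ),
        ((x, Sv ε, Sw ε) : X × X × X) ∈ K1 ×ˢ K3 ×ˢ K4 := by
      filter_upwards [hSvl.eventually_mem hK3n, hSwl.eventually_mem hK4n] with ε h1 h2
      exact ⟨mem_of_mem_nhds hK1n, h1, h2⟩
    have hc2 := key _ hid (K1 ×ˢ K3 ×ˢ K4) (hK1c.prod (hK3c.prod hK4c))
      (fun ε => (x, Sv ε, Sw ε)) hmem2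
    have heq : ∀ᶠ ε in 𝓝[>] (0:ℝ),
        (1 / ε) * dist (δ ε x (Sv ε)) (δ ε x (Sw ε)) =
        (1 / ε) * dist (δ ε (y ε) v) (δ ε (y ε) w) := by
      filter_upwards [self_mem_nhdsWithin] with ε hε
      have hε' : (0:ℝ) < ε := hε
      have hεinv : (0:ℝ) < ε⁻¹ := inv_pos.mpr hε'
      have e1 : δ ε x (Sv ε) = δ ε (y ε) v := by
        rw [hSv, hcomp ε ε⁻¹ hε' hεinv, mul_inv_cancel₀ (ne_of_gt hε'), hone]
      have e2 : δ ε x (Sw ε) = δ ε (y ε) w := by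
        rw [hSw, hcomp ε ε⁻¹ hε' hεinv, mul_inv_cancel₀ (ne_of_gt hε'), hone]
      rw [e1, e2]
    have hGlim : Tendsto (fun ε => (1 / ε) * dist (δ ε x (Sv ε)) (δ ε x (Sw ε)))
        (𝓝[>] (0:ℝ)) (𝓝 (dx x v w)) := hD.congr' (heq.mono fun ε h => h.symm)
    have hdxS : Tendsto (fun ε => dx x (Sv ε) (Sw ε)) (𝓝[>] (0:ℝ)) (𝓝 (dx x v w)) := by
      have h := hGlim.sub hc2
      rw [sub_zero] at h
      exact h.congr (fun ε => by ring)
    have hfin : Tendsto (fun ε => dx x (Sv ε) (Sw ε)) (𝓝[>] (0:ℝ))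
        (𝓝 (dx x (SigL x u v) (SigL x u w))) :=
      (hdxc.tendsto _).comp
        ((tendsto_const_nhds : Tendsto (fun _ : ℝ => x) _ _).prodMk_nhds
          (hSvl.prodMk_nhds hSwl))
    exact tendsto_nhds_unique hfin hdxS
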